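/- Let X ∈ ℝ^{n×p}, Y ∈ ℝ^n, let ‖·‖ be any norm on ℝ^p, and let β̂ be any minimizer over β ∈ ℝ^p of (1/√n)|Y − Xβ|₂ + ‖β‖. Then for every β* ∈ ℝ^p, writing ε := Y − Xβ*, the following holds: |X(β̂ − β*)|₂² ≤ ⟨Xᵀε, β̂ − β*⟩ + √n·|Y − Xβ̂|₂·‖β̂ − β*‖. In particular, this yields the corresponding inequalities for the Square-Root Lasso (with ‖β‖ = λ|β|₁, the last term being λ√n·|Y − Xβ̂|₂·|β̂ − β*|₁) and for the Square-Root Slope (with ‖β‖ = |β|_*, the sorted l1 norm). -/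

import Mathlib

noncomputable section

/-- The `l2` (Euclidean) norm of a vector. -/
def l2norm {m : ℕ} (u : Fin m → ℝ) : ℝ := Real.sqrt (∑ i, (u i) ^ 2)

lemma l2norm_nonneg' {m : ℕ} (u : Fin m → ℝ) : 0 ≤ l2norm u := Real.sqrt_nonneg _

lemma l2norm_sq' {m : ℕ} (u : Fin m → ℝ) : (l2norm u) ^ 2 = ∑ i, (u i) ^ 2 :=
  Real.sq_sqrt (Finset.sum_nonneg fun i _ => sq_nonneg _)

lemma l2norm_eq_norm' {m : ℕ} (u : Fin m → ℝ) :
    l2norm u = ‖(WithLp.equiv 2 (Fin m → ℝ)).symm u‖ := by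
  rw [EuclideanSpace.norm_eq]
  simp [l2norm, sq_abs]

lemma l2norm_add_le' {m : ℕ} (u v : Fin m → ℝ) :
    l2norm (u + v) ≤ l2norm u + l2norm v := by
  simp only [l2norm_eq_norm']
  exact norm_add_le ((WithLp.equiv 2 (Fin m → ℝ)).symm u) ((WithLp.equiv 2 (Fin m → ℝ)).symm v)

lemma l2norm_smul' {m : ℕ} (t : ℝ) (u : Fin m → ℝ) :
    l2norm (t • u) = |t| * l2norm u := by
  simp only [l2norm_eq_norm']
  rw [show (WithLp.equiv 2 (Fin m → ℝ)).symm (t • u)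
      = t • (WithLp.equiv 2 (Fin m → ℝ)).symm u from rfl, norm_smul, Real.norm_eq_abs]


lemma aux_div2t (s a b c K S t : ℝ) (ha0 : 0 ≤ a) (hb0 : 0 ≤ b) (hc0 : 0 ≤ c)
    (hK0 : 0 ≤ K) (hs0 : 0 ≤ s) (ht : 0 < t)
    (hab : a ≤ b + s * (t * K)) (hbac : b ≤ a + t * c)
    (hb2 : b ^ 2 = a ^ 2 + 2 * t * S + t ^ 2 * c ^ 2) :
    -S ≤ s * a * K + t * (s * K * c + c ^ 2 / 2 + s ^ 2 * K ^ 2 / 2) := by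
  have ha2 : a ^ 2 ≤ (b + s * (t * K)) ^ 2 := by
    have := mul_self_le_mul_self ha0 hab
    simpa [pow_two] using this
  have h5 : 0 ≤ 2 * t * S + t ^ 2 * c ^ 2 + 2 * (s * t * K) * b
      + s ^ 2 * t ^ 2 * K ^ 2 := by nlinarith [ha2, hb2]
  have h6 : 2 * (s * t * K) * b ≤ 2 * (s * t * K) * (a + t * c) := by
    apply mul_le_mul_of_nonneg_left hbac
    positivity
  have h7 : 0 ≤ 2 * t * S + 2 * (s * t * K) * a + t ^ 2 * c ^ 2
      + 2 * s * t ^ 2 * K * c + s ^ 2 * t ^ 2 * K ^ 2 := by nlinarith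
  have h8 : 0 ≤ 2 * t * (S + s * a * K
      + t * (s * K * c + c ^ 2 / 2 + s ^ 2 * K ^ 2 / 2)) := by nlinarith [h7]
  have h2t : (0:ℝ) < 2 * t := by linarith
  have h8' : 2 * t * (0:ℝ) ≤ 2 * t * (S + s * a * K
      + t * (s * K * c + c ^ 2 / 2 + s ^ 2 * K ^ 2 / 2)) := by rw [mul_zero]; exact h8
  have h9 := le_of_mul_le_mul_left h8' h2t
  linarith

lemma aux_limit (A B C : ℝ) (hC0 : 0 ≤ C)
    (h : ∀ t : ℝ, 0 < t → A ≤ B + t * C) : A ≤ B := by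
  apply le_of_forall_pos_le_add
  intro δ hδ
  have htpos : 0 < δ / (C + 1) := by positivity
  have h1 := h (δ / (C + 1)) htpos
  have hCle : δ / (C + 1) * C ≤ δ := by
    rw [div_mul_eq_mul_div, div_le_iff₀ (by linarith)]
    nlinarith
  linarith

/-- Lemmas 6 and 7 (first-order optimality consequence for square-root estimators
penalized by an arbitrary norm `N`, deterministic).  The Square-Root Lasso case
corresponds to `N = λ|·|₁` and the Square-Root Slope case to `N = |·|_*`. -/
theorem sqrt_estimator_first_order (n p : ℕ)
    (X : Matrix (Fin n) (Fin p) ℝ) (Y : Fin n → ℝ)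
    (N : (Fin p → ℝ) → ℝ)
    (hN0 : ∀ x : Fin p → ℝ, N x = 0 ↔ x = 0)
    (hNtri : ∀ x y : Fin p → ℝ, N (x + y) ≤ N x + N y)
    (hNhom : ∀ (a : ℝ) (x : Fin p → ℝ), N (a • x) = |a| * N x)
    (βh : Fin p → ℝ)
    (hmin : ∀ β : Fin p → ℝ,
      (1 / Real.sqrt n) * l2norm (Y - X.mulVec βh) + N βh
      ≤ (1 / Real.sqrt n) * l2norm (Y - X.mulVec β) + N β)
    (βs : Fin p → ℝ) :
    (l2norm (X.mulVec (βh - βs))) ^ 2 ≤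
      (∑ j, X.transpose.mulVec (Y - X.mulVec βs) j * (βh j - βs j))
      + Real.sqrt n * l2norm (Y - X.mulVec βh) * N (βh - βs) := by
  have hNnonneg : ∀ x : (Fin p → ℝ), 0 ≤ N x := by
    intro x
    have h0 : N (0 : Fin p → ℝ) = 0 := (hN0 0).mpr rfl
    have htr := hNtri x (-x)
    have hneg : N (-x) = N x := by
      have h := hNhom (-1) x
      simpa using h
    rw [add_neg_cancel, h0, hneg] at htr
    linarith
  set u : Fin p → ℝ := βh - βs with hu
  set r : Fin n → ℝ := Y - X.mulVec βh with hr
  set ε : Fin n → ℝ := Y - X.mulVec βs with he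
  have hεr : ε = r + X.mulVec u := by
    rw [he, hr, hu, Matrix.mulVec_sub]
    abel
  set s : ℝ := Real.sqrt n with hs
  set a : ℝ := l2norm r with ha
  set c : ℝ := l2norm (X.mulVec u) with hc
  set K : ℝ := N u with hK
  set S : ℝ := ∑ i, r i * X.mulVec u i with hS
  have ha0 : 0 ≤ a := l2norm_nonneg' _
  have hc0 : 0 ≤ c := l2norm_nonneg' _
  have hK0 : 0 ≤ K := hNnonneg u
  have hs0 : 0 ≤ s := Real.sqrt_nonneg _
  -- rewrite the goal sum
  have hsum : ∑ j, X.transpose.mulVec ε j * u j = S + c ^ 2 := by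
    have h1 : ∑ j, X.transpose.mulVec ε j * u j = ∑ i, ε i * X.mulVec u i := by
      simp only [Matrix.mulVec, dotProduct, Matrix.transpose_apply,
        Finset.sum_mul, Finset.mul_sum]
      rw [Finset.sum_comm]
      exact Finset.sum_congr rfl fun i _ => Finset.sum_congr rfl fun j _ => by ring
    rw [h1, hS, l2norm_sq', ← Finset.sum_add_distrib]
    refine Finset.sum_congr rfl fun i _ => ?_
    rw [hεr]
    simp only [Pi.add_apply]
    try ring
  -- the key inequality
  have hkey : -S ≤ s * a * K := by
    rcases Nat.eq_zero_or_pos n with hn | hn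
    · subst hn
      have hS0 : S = 0 := by simp [hS]
      rw [hS0, neg_zero]
      positivity
    · have hspos : 0 < s := Real.sqrt_pos.mpr (by exact_mod_cast hn)
      have hstep : ∀ t : ℝ, 0 < t →
          -S ≤ s * a * K + t * (s * K * c + c ^ 2 / 2 + s ^ 2 * K ^ 2 / 2) := by
        intro t ht
        set βt : Fin p → ℝ := βh + t • (βs - βh) with hβt
        set b : ℝ := l2norm (Y - X.mulVec βt) with hb
        have hb0 : 0 ≤ b := l2norm_nonneg' _
        have hYt : Y - X.mulVec βt = r + t • X.mulVec u := by
          rw [hβt, Matrix.mulVec_add, Matrix.mulVec_smul, hr, hu, Matrix.mulVec_sub,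
            Matrix.mulVec_sub]
          funext i
          simp [Pi.add_apply, Pi.sub_apply, Pi.smul_apply, smul_eq_mul]
          ring
        -- N βt ≤ N βh + t * K
        have hNβt : N βt ≤ N βh + t * K := by
          have h1 := hNtri βh (t • (βs - βh))
          have h2 : N (t • (βs - βh)) = t * K := by
            rw [hNhom, abs_of_pos ht]
            have : βs - βh = (-1 : ℝ) • u := by rw [hu]; funext j; simp; try ring
            rw [this, hNhom]
            simp [hK]
          rw [h2] at h1
          exact h1
        -- minimality at βt
        have hmin' := hmin βt
        have hab : a ≤ b + s * (t * K) := by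
          have h3 : (1 / s) * a ≤ (1 / s) * b + t * K := by
            rw [ha, hb, hr]
            linarith [hmin']
          have h4 := mul_le_mul_of_nonneg_left h3 hs0
          rw [mul_add, ← mul_assoc, ← mul_assoc, mul_one_div, div_self hspos.ne',
            one_mul, one_mul] at h4
          linarith
        have hbac : b ≤ a + t * c := by
          rw [hb, hYt, ha, hc]
          calc l2norm (r + t • X.mulVec u) ≤ l2norm r + l2norm (t • X.mulVec u) :=
                l2norm_add_le' _ _
            _ = l2norm r + t * l2norm (X.mulVec u) := by
                rw [l2norm_smul', abs_of_pos ht]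
        have hb2 : b ^ 2 = a ^ 2 + 2 * t * S + t ^ 2 * c ^ 2 := by
          rw [hb, hYt, ha, hc, l2norm_sq', l2norm_sq', l2norm_sq', hS,
            Finset.mul_sum, Finset.mul_sum, ← Finset.sum_add_distrib,
            ← Finset.sum_add_distrib]
          exact Finset.sum_congr rfl fun i _ => by
            simp [Pi.add_apply, Pi.smul_apply, smul_eq_mul]; ring
        exact aux_div2t s a b c K S t ha0 hb0 hc0 hK0 hs0 ht hab hbac hb2
      exact aux_limit _ _ _ (by positivity) hstep
  calc (l2norm (X.mulVec u)) ^ 2 = c ^ 2 := by rw [hc]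
    _ ≤ S + c ^ 2 + s * a * K := by linarith
    _ = (∑ j, X.transpose.mulVec ε j * u j) + s * a * K := by rw [hsum]
    _ = (∑ j, X.transpose.mulVec ε j * (βh j - βs j)) + Real.sqrt n * a * N u := by
        rw [hs, hK]
        congr 1
    _ = (∑ j, X.transpose.mulVec (Y - X.mulVec βs) j * (βh j - βs j))
        + Real.sqrt n * l2norm (Y - X.mulVec βh) * N (βh - βs) := by rw [he, ha, hr, hu]

end
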